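/- arXiv:2405.20769 — 3 statements merged into one kernel-verified Lean document; each statement's English description precedes it below -/
import Mathlib

section
/- Dominating pair of datasets for the Poisson-subsampled Gaussian mechanism under the substitution relation: let σ > 0 and γ ∈ [0,1]. For every pair of finite tuples D, D' of the same length with all entries in [−1,1] that differ in exactly one entry, and every α ≥ 0, H_α(Mγ(D) ‖ Mγ(D')) ≤ H_α((1−γ)·N(0,σ²) + γ·N(1,σ²) ‖ (1−γ)·N(0,σ²) + γ·N(−1,σ²)). Moreover this bound is realized by the datasets D = (0,…,0,1) and D' = (0,…,0,−1). -/
open MeasureTheory ProbabilityTheory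
open scoped ENNReal NNReal

/-- Hockey-stick divergence: `H_α(P ‖ Q) = sup_{E measurable} (P(E) − α·Q(E))`. -/
noncomputable def hsDiv {X : Type*} [MeasurableSpace X] (α : ℝ) (P Q : Measure X) : ℝ :=
  ⨆ E : {E : Set X // MeasurableSet E}, ((P E).toReal - α * (Q E).toReal)

/-- The Poisson-subsampled Gaussian mechanism:
`Mγ(x) = ∑_{S ⊆ [m]} γ^{|S|} (1−γ)^{m−|S|} · N(∑_{i∈S} x_i, σ²)`. -/
noncomputable def poissonGauss (σ γ : ℝ) {m : ℕ} (x : Fin m → ℝ) : Measure ℝ :=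
  ∑ S : Finset (Fin m),
    ENNReal.ofReal (γ ^ S.card * (1 - γ) ^ (m - S.card)) •
      gaussianReal (∑ i ∈ S, x i) ⟨σ ^ 2, sq_nonneg σ⟩

namespace PGaux
open Real Set
variable {v : ℝ≥0}
lemma gApply (hv : v ≠ 0) (μ : ℝ) (E : Set ℝ) :
    ((gaussianReal μ v) E).toReal = ∫ x in E, gaussianPDFReal μ v x := by
  rw [gaussianReal_apply_eq_integral μ hv E, ENNReal.toReal_ofReal]
  exact integral_nonneg fun x => gaussianPDFReal_nonneg μ v x

lemma gShift (μ c : ℝ) {E : Set ℝ} (hE : MeasurableSet E) :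
    (gaussianReal (μ + c) v) E = (gaussianReal μ v) ((fun x => x + c) ⁻¹' E) := by
  rw [← gaussianReal_map_add_const (μ := μ) (v := v) c,
    Measure.map_apply (measurable_add_const c) hE]

lemma gIoi_mono {μ₁ μ₂ : ℝ} (h : μ₁ ≤ μ₂) (u : ℝ) :
    (gaussianReal μ₁ v) (Ioi u) ≤ (gaussianReal μ₂ v) (Ioi u) := by
  have h2 : μ₁ + (μ₂ - μ₁) = μ₂ := by ring
  rw [← h2, gShift μ₁ (μ₂ - μ₁) measurableSet_Ioi]
  refine measure_mono ?_
  intro x hx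
  simp only [mem_preimage, mem_Ioi] at *
  linarith

/-- dominance on up-closed sets -/
lemma dom_upclosed (hv : v ≠ 0) {S : Set ℝ} (hS : MeasurableSet S)
    (hup : ∀ ⦃x y⦄, x ∈ S → x ≤ y → y ∈ S) {μ₁ μ₂ : ℝ} (h : μ₁ ≤ μ₂) :
    ∫ x in S, gaussianPDFReal μ₁ v x ≤ ∫ x in S, gaussianPDFReal μ₂ v x := by
  by_cases hne : S.Nonempty
  · by_cases hbd : BddBelow S
    · set u := sInf S with hu
      have hIoi : Ioi u ⊆ S := by
        intro x hx
        obtain ⟨y, hyS, hy⟩ := (csInf_lt_iff hbd hne).1 hx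
        exact hup hyS hy.le
      have hIci : S ⊆ Ici u := fun x hx => csInf_le hbd hx
      have key : ∀ μ : ℝ, ∫ x in S, gaussianPDFReal μ v x
          = ((gaussianReal μ v) (Ioi u)).toReal := by
        intro μ
        rw [gApply hv]
        refine le_antisymm ?_ ?_
        · calc ∫ x in S, gaussianPDFReal μ v x
              ≤ ∫ x in Ici u, gaussianPDFReal μ v x :=
                setIntegral_mono_set (integrable_gaussianPDFReal μ v).integrableOn
                  (ae_of_all _ fun x => gaussianPDFReal_nonneg μ v x)
                  (HasSubset.Subset.eventuallyLE hIci)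
            _ = ∫ x in Ioi u, gaussianPDFReal μ v x := integral_Ici_eq_integral_Ioi
        · exact setIntegral_mono_set (integrable_gaussianPDFReal μ v).integrableOn
            (ae_of_all _ fun x => gaussianPDFReal_nonneg μ v x)
            (HasSubset.Subset.eventuallyLE hIoi)
      rw [key μ₁, key μ₂]
      exact ENNReal.toReal_mono (measure_ne_top _ _) (gIoi_mono h u)
    · have hSuniv : S = univ := by
        rw [eq_univ_iff_forall]
        intro x
        rw [not_bddBelow_iff] at hbd
        obtain ⟨y, hyS, hy⟩ := hbd x
        exact hup hyS hy.le
      rw [hSuniv, Measure.restrict_univ,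
        integral_gaussianPDFReal_eq_one μ₁ hv, integral_gaussianPDFReal_eq_one μ₂ hv]
  · rw [not_nonempty_iff_eq_empty] at hne
    rw [hne]
    simp

/-- the difference of densities appearing in the subsampled pair -/
noncomputable def Jf (v : ℝ≥0) (c₁ c₂ m₁ m₂ : ℝ) (x : ℝ) : ℝ :=
  gaussianPDFReal 0 v x - c₁ * gaussianPDFReal m₁ v x - c₂ * gaussianPDFReal m₂ v x

lemma Jf_integrable (c₁ c₂ m₁ m₂ : ℝ) : Integrable (Jf v c₁ c₂ m₁ m₂) :=
  (((integrable_gaussianPDFReal 0 v).sub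
    ((integrable_gaussianPDFReal m₁ v).const_mul c₁)).sub
    ((integrable_gaussianPDFReal m₂ v).const_mul c₂))

lemma Jf_meas (c₁ c₂ m₁ m₂ : ℝ) : Measurable (Jf v c₁ c₂ m₁ m₂) :=
  ((measurable_gaussianPDFReal 0 v).sub
    ((measurable_gaussianPDFReal m₁ v).const_mul c₁)).sub
    ((measurable_gaussianPDFReal m₂ v).const_mul c₂)

lemma Jf_setIntegral (hv : v ≠ 0) (c₁ c₂ m₁ m₂ : ℝ) {S : Set ℝ} :
    ∫ x in S, Jf v c₁ c₂ m₁ m₂ x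
      = (∫ x in S, gaussianPDFReal 0 v x) - c₁ * (∫ x in S, gaussianPDFReal m₁ v x)
        - c₂ * (∫ x in S, gaussianPDFReal m₂ v x) := by
  unfold Jf
  rw [integral_sub, integral_sub, MeasureTheory.integral_const_mul, MeasureTheory.integral_const_mul]
  · exact (integrable_gaussianPDFReal 0 v).integrableOn
  · exact ((integrable_gaussianPDFReal m₁ v).const_mul c₁).integrableOn
  · exact (((integrable_gaussianPDFReal 0 v).sub
      ((integrable_gaussianPDFReal m₁ v).const_mul c₁)).integrableOn)
  · exact ((integrable_gaussianPDFReal m₂ v).const_mul c₂).integrableOn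





/-- toReal of gaussian measure as set integral -/
lemma pdf_mono (hv : v ≠ 0) {μ x y : ℝ} (h : (x - μ)^2 ≤ (y - μ)^2) :
    gaussianPDFReal μ v y ≤ gaussianPDFReal μ v x := by
  unfold gaussianPDFReal
  have h2v : (0:ℝ) < 2 * v := by
    have : (0:ℝ) < v := by exact_mod_cast pos_iff_ne_zero.2 hv
    linarith
  refine mul_le_mul_of_nonneg_left ?_ (by positivity)
  refine Real.exp_le_exp.2 ?_
  rw [neg_div, neg_div, neg_le_neg_iff]
  exact div_le_div_of_nonneg_right h h2v.le

lemma pdf_congr {μ ν x y : ℝ} (h : (x - μ)^2 = (y - ν)^2) :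
    gaussianPDFReal μ v x = gaussianPDFReal ν v y := by
  unfold gaussianPDFReal
  rw [h]

/-- ratio representation -/
lemma pdf_ratio (m x : ℝ) :
    gaussianPDFReal m v x
      = gaussianPDFReal 0 v x * rexp ((2*m*x - m^2) / (2*v)) := by
  unfold gaussianPDFReal
  have h : rexp (-(x - 0)^2/(2*(v:ℝ))) * rexp ((2*m*x - m^2)/(2*(v:ℝ)))
      = rexp (-(x - m)^2/(2*(v:ℝ))) := by
    rw [← Real.exp_add, ← add_div]
    congr 1
    ring
  conv_rhs => rw [mul_assoc]
  rw [h]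

lemma maxlem {p q s t : ℝ} (hpq : q ≤ p) (hst : t ≤ s) :
    max (p - s) 0 + max (q - t) 0 ≤ max (p - t) 0 + max (q - s) 0 := by
  rcases le_total (p - s) 0 with h1 | h1 <;>
  rcases le_total (q - t) 0 with h2 | h2 <;>
  rcases le_total (p - t) 0 with h3 | h3 <;>
  rcases le_total (q - s) 0 with h4 | h4 <;>
  simp [max_eq_left, max_eq_right, h1, h2, h3, h4] <;> linarith

lemma sum_pow_card {ι : Type*} [DecidableEq ι] (γ : ℝ) (s : Finset ι) :
    ∑ t ∈ s.powerset, γ ^ t.card * (1 - γ) ^ (s.card - t.card) = 1 := by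
  induction s using Finset.induction_on with
  | empty => simp
  | @insert a s ha ih =>
    rw [Finset.sum_powerset_insert ha, Finset.card_insert_of_notMem ha]
    have h1 : ∑ t ∈ s.powerset, γ ^ t.card * (1-γ) ^ (s.card + 1 - t.card)
        = (1 - γ) * ∑ t ∈ s.powerset, γ ^ t.card * (1-γ) ^ (s.card - t.card) := by
      rw [Finset.mul_sum]
      refine Finset.sum_congr rfl fun t ht => ?_
      have hc : t.card ≤ s.card := Finset.card_le_card (Finset.mem_powerset.1 ht)
      have : s.card + 1 - t.card = (s.card - t.card) + 1 := by omega
      rw [this, pow_succ]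
      ring
    have h2 : ∑ t ∈ s.powerset, γ ^ (insert a t).card * (1-γ) ^ (s.card + 1 - (insert a t).card)
        = γ * ∑ t ∈ s.powerset, γ ^ t.card * (1-γ) ^ (s.card - t.card) := by
      rw [Finset.mul_sum]
      refine Finset.sum_congr rfl fun t ht => ?_
      have hat : a ∉ t := fun hmem => ha (Finset.mem_powerset.1 ht hmem)
      have hc : t.card ≤ s.card := Finset.card_le_card (Finset.mem_powerset.1 ht)
      rw [Finset.card_insert_of_notMem hat]
      have : s.card + 1 - (t.card + 1) = s.card - t.card := by omega
      rw [this, pow_succ]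
      ring
    rw [h1, h2, ih]
    ring


lemma gNeg (μ : ℝ) {E : Set ℝ} (hE : MeasurableSet E) :
    (gaussianReal μ v) E = (gaussianReal (-μ) v) ((fun x => -x) ⁻¹' E) := by
  have hmap := gaussianReal_map_const_mul (μ := -μ) (v := v) (-1 : ℝ)
  have h1 : ((-1:ℝ))*(-μ) = μ := by ring
  have h2 : (NNReal.mk ((-1:ℝ)^2) (sq_nonneg _)) = 1 := by ext; norm_num
  rw [h1, h2, one_mul] at hmap
  rw [← hmap, Measure.map_apply (measurable_const_mul _) hE]
  congr 1
  ext x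
  simp


lemma core (hv : v ≠ 0) {c₁ c₂ m₁ m₂ : ℝ} (hc₁ : 0 ≤ c₁) (hc₂ : 0 ≤ c₂)
    (hm₁ : -1 ≤ m₁) (hm₁0 : m₁ ≤ 0) (hm₂ : -2 ≤ m₂) (hm₂0 : m₂ ≤ 0)
    {E : Set ℝ} (hE : MeasurableSet E) :
    ∃ F : Set ℝ, MeasurableSet F ∧
      ∫ x in E, Jf v c₁ c₂ m₁ m₂ x ≤ ∫ x in F, Jf v c₁ c₂ (-1) (-2) x := by
  have h2v : (0:ℝ) < 2 * v := by
    have : (0:ℝ) < v := by exact_mod_cast pos_iff_ne_zero.2 hv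
    linarith
  set S := {x : ℝ | 0 ≤ Jf v c₁ c₂ m₁ m₂ x} with hSdef
  have hS : MeasurableSet S := measurableSet_le measurable_const (Jf_meas c₁ c₂ m₁ m₂)
  have hrep : ∀ z, Jf v c₁ c₂ m₁ m₂ z = gaussianPDFReal 0 v z *
      (1 - (c₁ * rexp ((2*m₁*z - m₁^2)/(2*(v:ℝ))) + c₂ * rexp ((2*m₂*z - m₂^2)/(2*(v:ℝ))))) := by
    intro z
    unfold Jf
    rw [pdf_ratio m₁ z, pdf_ratio m₂ z]
    ring
  have hpos : ∀ z : ℝ, 0 < gaussianPDFReal 0 v z := fun z => gaussianPDFReal_pos _ v z hv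
  have hup : ∀ ⦃x y⦄, x ∈ S → x ≤ y → y ∈ S := by
    intro x y hx hxy
    rw [mem_setOf_eq, hrep] at hx ⊢
    have hbx : 0 ≤ 1 - (c₁ * rexp ((2*m₁*x - m₁^2)/(2*(v:ℝ)))
        + c₂ * rexp ((2*m₂*x - m₂^2)/(2*(v:ℝ)))) := by
      by_contra hcon
      push_neg at hcon
      nlinarith [hpos x]
    have e1 : rexp ((2*m₁*y - m₁^2)/(2*(v:ℝ))) ≤ rexp ((2*m₁*x - m₁^2)/(2*(v:ℝ))) := by
      apply Real.exp_le_exp.2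
      apply div_le_div_of_nonneg_right _ h2v.le
      nlinarith
    have e2 : rexp ((2*m₂*y - m₂^2)/(2*(v:ℝ))) ≤ rexp ((2*m₂*x - m₂^2)/(2*(v:ℝ))) := by
      apply Real.exp_le_exp.2
      apply div_le_div_of_nonneg_right _ h2v.le
      nlinarith
    have : 0 ≤ 1 - (c₁ * rexp ((2*m₁*y - m₁^2)/(2*(v:ℝ)))
        + c₂ * rexp ((2*m₂*y - m₂^2)/(2*(v:ℝ)))) := by
      have := mul_le_mul_of_nonneg_left e1 hc₁
      have := mul_le_mul_of_nonneg_left e2 hc₂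
      linarith
    exact mul_nonneg (hpos y).le this
  -- step 1 : ∫_E J ≤ ∫_S J
  have hstep1 : ∫ x in E, Jf v c₁ c₂ m₁ m₂ x ≤ ∫ x in S, Jf v c₁ c₂ m₁ m₂ x := by
    have h1 := integral_inter_add_diff (f := Jf v c₁ c₂ m₁ m₂) (μ := volume) (s := E) (t := S) hS
      (Jf_integrable c₁ c₂ m₁ m₂).integrableOn
    have h2 := integral_inter_add_diff (f := Jf v c₁ c₂ m₁ m₂) (μ := volume) (s := S) (t := E) hE
      (Jf_integrable c₁ c₂ m₁ m₂).integrableOn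
    have hd1 : ∫ x in E \ S, Jf v c₁ c₂ m₁ m₂ x ≤ 0 := by
      refine setIntegral_nonpos (hE.diff hS) fun x hx => ?_
      have := hx.2
      rw [hSdef, mem_setOf_eq] at this
      exact (not_le.1 this).le
    have hd2 : 0 ≤ ∫ x in S \ E, Jf v c₁ c₂ m₁ m₂ x := by
      refine setIntegral_nonneg (hS.diff hE) fun x hx => ?_
      exact hx.1
    have hcomm : E ∩ S = S ∩ E := inter_comm E S
    rw [hcomm] at h1
    linarith
  -- step 2 : compare parameters on S
  refine ⟨S, hS, hstep1.trans ?_⟩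
  rw [Jf_setIntegral hv, Jf_setIntegral hv]
  have d1 : ∫ x in S, gaussianPDFReal (-1) v x ≤ ∫ x in S, gaussianPDFReal m₁ v x :=
    dom_upclosed hv hS hup hm₁
  have d2 : ∫ x in S, gaussianPDFReal (-2) v x ≤ ∫ x in S, gaussianPDFReal m₂ v x :=
    dom_upclosed hv hS hup hm₂
  have := mul_le_mul_of_nonneg_left d1 hc₁
  have := mul_le_mul_of_nonneg_left d2 hc₂
  linarith

lemma Jf_le_pdf {c₁ c₂ m₁ m₂ : ℝ} (hc₁ : 0 ≤ c₁) (hc₂ : 0 ≤ c₂) (x : ℝ) :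
    Jf v c₁ c₂ m₁ m₂ x ≤ gaussianPDFReal 0 v x := by
  unfold Jf
  have h1 := mul_nonneg hc₁ (gaussianPDFReal_nonneg m₁ v x)
  have h2 := mul_nonneg hc₂ (gaussianPDFReal_nonneg m₂ v x)
  linarith

lemma Jf_max_int {c₁ c₂ m₁ m₂ : ℝ} (hc₁ : 0 ≤ c₁) (hc₂ : 0 ≤ c₂) :
    Integrable (fun x => max (Jf v c₁ c₂ m₁ m₂ x) 0) := by
  refine Integrable.mono (integrable_gaussianPDFReal 0 v)
    (((Jf_meas c₁ c₂ m₁ m₂).max measurable_const).aestronglyMeasurable) (ae_of_all _ ?_)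
  intro x
  rw [Real.norm_eq_abs, Real.norm_eq_abs, abs_of_nonneg (le_max_right _ _),
    abs_of_nonneg (gaussianPDFReal_nonneg 0 v x)]
  exact max_le (Jf_le_pdf hc₁ hc₂ x) (gaussianPDFReal_nonneg 0 v x)

lemma int_comp_neg {f : ℝ → ℝ} (hf : Integrable f (volume : Measure ℝ)) :
    Integrable (fun x => f (-x)) (volume : Measure ℝ) := by
  have h := (MeasureTheory.MeasurePreserving.integrable_comp
    (Measure.measurePreserving_neg (volume : Measure ℝ)) hf.aestronglyMeasurable).2 hf
  exact h

lemma integral_split (g : ℝ → ℝ) (hg : Integrable g (volume : Measure ℝ)) :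
    ∫ x, g x = ∫ x in Ioi (0:ℝ), (g x + g (-x)) := by
  have h1 : ∫ x in Iic (0:ℝ), g x = ∫ x in Ioi (0:ℝ), g (-x) := by
    have h := integral_comp_neg_Iic (0:ℝ) (fun x => g (-x))
    simpa using h
  rw [← intervalIntegral.integral_Iic_add_Ioi (b := (0:ℝ)) hg.integrableOn hg.integrableOn, h1,
    ← integral_add (int_comp_neg hg).integrableOn hg.integrableOn]
  congr 1
  ext x
  ring

lemma refl_one (hv : v ≠ 0) {c₁ c₂ m₁ m₂ : ℝ} (hc₁ : 0 ≤ c₁) (hc₂ : 0 ≤ c₂)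
    (hm₁ : m₁ ≤ 0) (hm₂ : 0 ≤ m₂) :
    ∫ x, max (Jf v c₁ c₂ m₁ m₂ x) 0 ≤ ∫ x, max (Jf v c₁ c₂ m₁ (-m₂) x) 0 := by
  have h1int := Jf_max_int (v := v) (m₁ := m₁) (m₂ := m₂) hc₁ hc₂
  have h2int := Jf_max_int (v := v) (m₁ := m₁) (m₂ := -m₂) hc₁ hc₂
  rw [integral_split _ h1int, integral_split _ h2int]
  refine setIntegral_mono_on
    (h1int.add (int_comp_neg h1int)).integrableOn
    (h2int.add (int_comp_neg h2int)).integrableOn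
    measurableSet_Ioi ?_
  intro x hx
  rw [mem_Ioi] at hx
  have f0 : gaussianPDFReal 0 v (-x) = gaussianPDFReal 0 v x := pdf_congr (by ring)
  have fm2a : gaussianPDFReal (-m₂) v x = gaussianPDFReal m₂ v (-x) := pdf_congr (by ring)
  have fm2b : gaussianPDFReal (-m₂) v (-x) = gaussianPDFReal m₂ v x := pdf_congr (by ring)
  have hq : gaussianPDFReal m₁ v x ≤ gaussianPDFReal m₁ v (-x) := by
    refine pdf_mono hv ?_
    nlinarith
  have hst : gaussianPDFReal m₂ v (-x) ≤ gaussianPDFReal m₂ v x := by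
    refine pdf_mono hv ?_
    nlinarith
  simp only [Jf]
  rw [f0, fm2a, fm2b]
  exact maxlem (by nlinarith) (by nlinarith)

lemma max_int_eq (c₁ c₂ m₁ m₂ : ℝ) :
    ∫ x, max (Jf v c₁ c₂ m₁ m₂ x) 0
      = ∫ x in {y : ℝ | 0 ≤ Jf v c₁ c₂ m₁ m₂ y}, Jf v c₁ c₂ m₁ m₂ x := by
  have hS : MeasurableSet {y : ℝ | 0 ≤ Jf v c₁ c₂ m₁ m₂ y} :=
    measurableSet_le measurable_const (Jf_meas c₁ c₂ m₁ m₂)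
  rw [← integral_indicator hS]
  have hfe : (fun x => max (Jf v c₁ c₂ m₁ m₂ x) 0)
      = {y : ℝ | 0 ≤ Jf v c₁ c₂ m₁ m₂ y}.indicator (fun x => Jf v c₁ c₂ m₁ m₂ x) := by
    funext x
    by_cases hx : x ∈ {y : ℝ | 0 ≤ Jf v c₁ c₂ m₁ m₂ y}
    · rw [indicator_of_mem hx, max_eq_left hx]
    · rw [indicator_of_notMem hx, max_eq_right]
      rw [mem_setOf_eq] at hx
      exact (not_le.1 hx).le
  rw [hfe]

lemma setInt_le_max (hc₁ : 0 ≤ c₁) (hc₂ : 0 ≤ c₂) {E : Set ℝ} (hE : MeasurableSet E)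
    (m₁ m₂ : ℝ) :
    ∫ x in E, Jf v c₁ c₂ m₁ m₂ x ≤ ∫ x, max (Jf v c₁ c₂ m₁ m₂ x) 0 := by
  calc ∫ x in E, Jf v c₁ c₂ m₁ m₂ x
      ≤ ∫ x in E, max (Jf v c₁ c₂ m₁ m₂ x) 0 :=
        setIntegral_mono (Jf_integrable c₁ c₂ m₁ m₂).integrableOn
          (Jf_max_int hc₁ hc₂).integrableOn (fun x => le_max_left _ _)
    _ ≤ ∫ x, max (Jf v c₁ c₂ m₁ m₂ x) 0 :=
        setIntegral_le_integral (Jf_max_int hc₁ hc₂) (ae_of_all _ fun x => le_max_right _ _)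

lemma chain (hv : v ≠ 0) {c₁ c₂ m₁ m₂ : ℝ} (hc₁ : 0 ≤ c₁) (hc₂ : 0 ≤ c₂)
    (hm₁ : -1 ≤ m₁) (hm₁' : m₁ ≤ 1) (hm₂ : -2 ≤ m₂) (hm₂' : m₂ ≤ 2)
    {E : Set ℝ} (hE : MeasurableSet E) :
    ∃ F : Set ℝ, MeasurableSet F ∧
      ∫ x in E, Jf v c₁ c₂ m₁ m₂ x ≤ ∫ x in F, Jf v c₁ c₂ (-1) (-2) x := by
  have hswap : ∀ (a₁ a₂ b₁ b₂ : ℝ) (x : ℝ), Jf v a₁ a₂ b₁ b₂ x = Jf v a₂ a₁ b₂ b₁ x := by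
    intro a₁ a₂ b₁ b₂ x
    unfold Jf
    ring
  rcases le_or_gt m₁ 0 with h1 | h1 <;> rcases le_or_gt m₂ 0 with h2 | h2
  · exact core hv hc₁ hc₂ hm₁ h1 hm₂ h2 hE
  · -- m₁ ≤ 0 < m₂ : flip m₂
    have step : ∫ x in E, Jf v c₁ c₂ m₁ m₂ x
        ≤ ∫ x in {y : ℝ | 0 ≤ Jf v c₁ c₂ m₁ (-m₂) y}, Jf v c₁ c₂ m₁ (-m₂) x := by
      calc ∫ x in E, Jf v c₁ c₂ m₁ m₂ x
          ≤ ∫ x, max (Jf v c₁ c₂ m₁ m₂ x) 0 := setInt_le_max hc₁ hc₂ hE m₁ m₂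
        _ ≤ ∫ x, max (Jf v c₁ c₂ m₁ (-m₂) x) 0 := refl_one hv hc₁ hc₂ h1 h2.le
        _ = _ := max_int_eq c₁ c₂ m₁ (-m₂)
    obtain ⟨F, hF, hle⟩ := core hv (m₁ := m₁) (m₂ := -m₂) hc₁ hc₂ hm₁ h1 (by linarith) (by linarith)
      (measurableSet_le measurable_const (Jf_meas c₁ c₂ m₁ (-m₂)))
    exact ⟨F, hF, step.trans hle⟩
  · -- m₂ ≤ 0 < m₁ : flip m₁ via swap
    have step : ∫ x in E, Jf v c₁ c₂ m₁ m₂ x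
        ≤ ∫ x in {y : ℝ | 0 ≤ Jf v c₂ c₁ m₂ (-m₁) y}, Jf v c₂ c₁ m₂ (-m₁) x := by
      calc ∫ x in E, Jf v c₁ c₂ m₁ m₂ x
          = ∫ x in E, Jf v c₂ c₁ m₂ m₁ x := by simp only [hswap c₁ c₂ m₁ m₂]
        _ ≤ ∫ x, max (Jf v c₂ c₁ m₂ m₁ x) 0 := setInt_le_max hc₂ hc₁ hE m₂ m₁
        _ ≤ ∫ x, max (Jf v c₂ c₁ m₂ (-m₁) x) 0 := refl_one hv hc₂ hc₁ h2 h1.le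
        _ = _ := max_int_eq c₂ c₁ m₂ (-m₁)
    have hrw : ∫ x in {y : ℝ | 0 ≤ Jf v c₂ c₁ m₂ (-m₁) y}, Jf v c₂ c₁ m₂ (-m₁) x
        = ∫ x in {y : ℝ | 0 ≤ Jf v c₂ c₁ m₂ (-m₁) y}, Jf v c₁ c₂ (-m₁) m₂ x := by
      simp only [hswap c₂ c₁ m₂ (-m₁)]
    obtain ⟨F, hF, hle⟩ := core hv (m₁ := -m₁) (m₂ := m₂) hc₁ hc₂ (by linarith) (by linarith) hm₂ h2
      (measurableSet_le measurable_const (Jf_meas c₂ c₁ m₂ (-m₁)))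
    exact ⟨F, hF, step.trans (hrw ▸ hle)⟩
  · -- both positive : reflect everything
    have hE' : MeasurableSet ((fun x : ℝ => -x) ⁻¹' E) := hE.preimage measurable_neg
    have hrefl : ∫ x in E, Jf v c₁ c₂ m₁ m₂ x
        = ∫ x in (fun x : ℝ => -x) ⁻¹' E, Jf v c₁ c₂ (-m₁) (-m₂) x := by
      rw [Jf_setIntegral hv, Jf_setIntegral hv, ← gApply hv, ← gApply hv, ← gApply hv,
        ← gApply hv, ← gApply hv, ← gApply hv]
      rw [gNeg (μ := (0:ℝ)) hE, gNeg (μ := m₁) hE, gNeg (μ := m₂) hE, neg_zero]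
    rw [hrefl]
    exact core hv (m₁ := -m₁) (m₂ := -m₂) hc₁ hc₂ (by linarith) (by linarith) (by linarith)
      (by linarith) hE'

/-! ### hockey-stick divergence helpers -/

lemma hsDiv_bdd {α : ℝ} (hα : 0 ≤ α) (P Q : Measure ℝ) [IsFiniteMeasure P] :
    BddAbove (Set.range fun E : {E : Set ℝ // MeasurableSet E} =>
      ((P E).toReal - α * (Q E).toReal)) := by
  refine ⟨(P Set.univ).toReal, ?_⟩
  rintro x ⟨E, rfl⟩
  have h1 : (P E.1).toReal ≤ (P Set.univ).toReal :=
    ENNReal.toReal_mono (measure_ne_top _ _) (measure_mono (Set.subset_univ _))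
  have h2 : 0 ≤ α * (Q E.1).toReal := mul_nonneg hα ENNReal.toReal_nonneg
  simp only
  linarith

lemma le_hsDiv {α : ℝ} (hα : 0 ≤ α) (P Q : Measure ℝ) [IsFiniteMeasure P] {E : Set ℝ}
    (hE : MeasurableSet E) :
    (P E).toReal - α * (Q E).toReal ≤ hsDiv α P Q :=
  le_ciSup (hsDiv_bdd hα P Q) ⟨E, hE⟩

lemma hsDiv_le {α c : ℝ} {P Q : Measure ℝ}
    (h : ∀ E : Set ℝ, MeasurableSet E → (P E).toReal - α * (Q E).toReal ≤ c) :
    hsDiv α P Q ≤ c := by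
  have : Nonempty {E : Set ℝ // MeasurableSet E} := ⟨⟨∅, MeasurableSet.empty⟩⟩
  exact ciSup_le fun E => h E.1 E.2

lemma hsDiv_nonneg {α : ℝ} (hα : 0 ≤ α) (P Q : Measure ℝ) [IsFiniteMeasure P] :
    0 ≤ hsDiv α P Q := by
  have := le_hsDiv hα P Q MeasurableSet.empty
  simpa using this

/-! ### the dominating mixtures -/

noncomputable def Om (v : ℝ≥0) (γ s : ℝ) : Measure ℝ :=
  ENNReal.ofReal (1 - γ) • gaussianReal 0 v + ENNReal.ofReal γ • gaussianReal s v

lemma Om_apply {γ : ℝ} (hγ0 : 0 ≤ γ) (hγ1 : γ ≤ 1) (s : ℝ) (E : Set ℝ) :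
    ((Om v γ s) E).toReal
      = (1-γ) * ((gaussianReal 0 v) E).toReal + γ * ((gaussianReal s v) E).toReal := by
  rw [Om, Measure.add_apply, Measure.smul_apply, Measure.smul_apply, smul_eq_mul, smul_eq_mul,
    ENNReal.toReal_add (ENNReal.mul_ne_top ENNReal.ofReal_ne_top (measure_ne_top _ _))
      (ENNReal.mul_ne_top ENNReal.ofReal_ne_top (measure_ne_top _ _)),
    ENNReal.toReal_mul, ENNReal.toReal_mul, ENNReal.toReal_ofReal (by linarith),
    ENNReal.toReal_ofReal hγ0]

lemma Om_prob {γ s : ℝ} (hγ0 : 0 ≤ γ) (hγ1 : γ ≤ 1) :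
    IsProbabilityMeasure (Om v γ s) := by
  constructor
  rw [Om, Measure.add_apply, Measure.smul_apply, Measure.smul_apply, smul_eq_mul, smul_eq_mul,
    measure_univ, measure_univ, mul_one, mul_one, ← ENNReal.ofReal_add (by linarith) hγ0]
  norm_num

/-! ### the per-component bound (advanced joint convexity + reduction) -/

lemma perS (hv : v ≠ 0) {γ α : ℝ} (hγ0 : 0 < γ) (hγ1 : γ ≤ 1) (hα : 1 ≤ α)
    {a b : ℝ} (t : ℝ) (ha : |a| ≤ 1) (hb : |b| ≤ 1)
    {E : Set ℝ} (hE : MeasurableSet E) :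
    (1-γ)*(1-α)*((gaussianReal t v) E).toReal + γ*((gaussianReal (t+a) v) E).toReal
      - α*γ*((gaussianReal (t+b) v) E).toReal ≤ hsDiv α (Om v γ 1) (Om v γ (-1)) := by
  haveI : IsProbabilityMeasure (Om v γ 1) := Om_prob (v := v) hγ0.le hγ1
  have hγ' : γ ≠ 0 := hγ0.ne'
  set α₁ : ℝ := 1 + (α-1)/γ with hα₁def
  have hα₁ : 1 ≤ α₁ := by
    have : 0 ≤ (α-1)/γ := div_nonneg (by linarith) hγ0.le
    simp only [hα₁def]
    linarith
  have hα₁pos : 0 < α₁ := by linarith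
  set w : ℝ := (α₁ - 1)*(1-γ)/α₁ with hwdef
  have hw0 : 0 ≤ w := div_nonneg (mul_nonneg (by linarith) (by linarith)) hα₁pos.le
  have hw1 : w ≤ 1 := by
    rw [hwdef, div_le_one hα₁pos]
    nlinarith
  have hγα₁ : γ * α₁ = γ + α - 1 := by
    rw [hα₁def]
    field_simp
    ring
  have hwα : α₁ * w = (α₁ - 1)*(1-γ) := by
    rw [hwdef]
    field_simp
  have hm : γ * (α₁ - 1) = α - 1 := by linear_combination hγα₁
  have k1 : γ * (α₁ * w) = (α-1)*(1-γ) := by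
    rw [hwα]
    linear_combination (1-γ) * hm
  have k2 : γ * (α₁ * (1-w)) = α * γ := by
    have : γ * (α₁ * (1-w)) = γ * α₁ - γ * (α₁ * w) := by ring
    rw [this, k1, hγα₁]
    ring
  have hc₁ : 0 ≤ α₁ * w := mul_nonneg hα₁pos.le hw0
  have hc₂ : 0 ≤ α₁ * (1-w) := mul_nonneg hα₁pos.le (by linarith)
  -- the key identity
  have key : ∀ (t a b : ℝ) (E : Set ℝ), MeasurableSet E →
      (1-γ)*(1-α)*((gaussianReal t v) E).toReal + γ*((gaussianReal (t+a) v) E).toReal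
        - α*γ*((gaussianReal (t+b) v) E).toReal
      = γ * ∫ x in ((fun x => x + (t+a)) ⁻¹' E),
          Jf v (α₁*w) (α₁*(1-w)) (-a) (b-a) x := by
    intro t a b E hE
    set E₂ := (fun x => x + (t+a)) ⁻¹' E with hE₂def
    have r0 : (gaussianReal (t+a) v) E = (gaussianReal 0 v) E₂ := by
      have := gShift (v := v) 0 (t+a) hE
      rw [zero_add] at this
      exact this
    have r1 : (gaussianReal t v) E = (gaussianReal (-a) v) E₂ := by
      have := gShift (v := v) (-a) (t+a) hE
      rw [show -a + (t+a) = t by ring] at this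
      exact this
    have r2 : (gaussianReal (t+b) v) E = (gaussianReal (b-a) v) E₂ := by
      have := gShift (v := v) (b-a) (t+a) hE
      rw [show b-a + (t+a) = t+b by ring] at this
      exact this
    rw [r0, r1, r2, Jf_setIntegral hv, ← gApply hv, ← gApply hv, ← gApply hv]
    set X := ((gaussianReal (-a) v) E₂).toReal
    set Y := ((gaussianReal 0 v) E₂).toReal
    set Z := ((gaussianReal (b-a) v) E₂).toReal
    have e : γ*(Y - (α₁*w)*X - (α₁*(1-w))*Z)
        = γ*Y - (γ*(α₁*w))*X - (γ*(α₁*(1-w)))*Z := by ring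
    rw [e, k1, k2]
    ring
  rw [key t a b E hE]
  have habs := abs_le.1 ha
  have hbabs := abs_le.1 hb
  obtain ⟨F, hF, hch⟩ := chain hv (m₁ := -a) (m₂ := b-a) hc₁ hc₂
    (by linarith) (by linarith) (by linarith) (by linarith)
    (hE.preimage (measurable_add_const _))
  refine (mul_le_mul_of_nonneg_left hch hγ0.le).trans ?_
  -- now rewrite the target as a hockey-stick value of the dominating pair
  set F₂ : Set ℝ := (fun x : ℝ => x - 1) ⁻¹' F with hF₂def
  have hF₂ : MeasurableSet F₂ := hF.preimage (measurable_add_const _)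
  have hFF : (fun x : ℝ => x + (0 + 1)) ⁻¹' F₂ = F := by
    ext x
    simp [hF₂def]
  have hkey2 := key 0 1 (-1) F₂ hF₂
  rw [hFF] at hkey2
  rw [show (-(1:ℝ)) = -(1:ℝ) by rfl, show ((-1:ℝ) - 1) = (-2:ℝ) by norm_num] at hkey2
  have hval : γ * ∫ x in F, Jf v (α₁*w) (α₁*(1-w)) (-1) (-2) x
      = ((Om v γ 1) F₂).toReal - α * ((Om v γ (-1)) F₂).toReal := by
    rw [← hkey2, Om_apply hγ0.le hγ1, Om_apply hγ0.le hγ1]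
    rw [show (0:ℝ) + 1 = 1 by norm_num, show (0:ℝ) + (-1) = -1 by norm_num] at *
    ring
  rw [hval]
  exact le_hsDiv (by linarith) _ _ hF₂

/-! ### expansion of the mechanism -/

lemma pg_apply (σ : ℝ) {γ : ℝ} (hγ0 : 0 ≤ γ) (hγ1 : γ ≤ 1) {m : ℕ} (x : Fin m → ℝ)
    (E : Set ℝ) :
    ((poissonGauss σ γ x) E).toReal
      = ∑ S : Finset (Fin m), γ ^ S.card * (1-γ) ^ (m - S.card)
          * ((gaussianReal (∑ i ∈ S, x i) ⟨σ^2, sq_nonneg σ⟩) E).toReal := by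
  rw [poissonGauss, Measure.finset_sum_apply, ENNReal.toReal_sum]
  · refine Finset.sum_congr rfl fun S _ => ?_
    rw [Measure.smul_apply, smul_eq_mul, ENNReal.toReal_mul, ENNReal.toReal_ofReal]
    exact mul_nonneg (pow_nonneg hγ0 _) (pow_nonneg (by linarith) _)
  · intro S _
    rw [Measure.smul_apply, smul_eq_mul]
    haveI := instIsProbabilityMeasureGaussianReal (∑ i ∈ S, x i) ⟨σ^2, sq_nonneg σ⟩
    exact ENNReal.mul_ne_top ENNReal.ofReal_ne_top (measure_ne_top _ _)

lemma sum_coeff (γ : ℝ) (m : ℕ) :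
    ∑ S : Finset (Fin m), γ ^ S.card * (1-γ) ^ (m - S.card) = 1 := by
  have h := sum_pow_card γ (Finset.univ : Finset (Fin m))
  rw [Finset.powerset_univ] at h
  simpa using h

lemma pg_prob (σ : ℝ) {γ : ℝ} (hγ0 : 0 ≤ γ) (hγ1 : γ ≤ 1) {m : ℕ} (x : Fin m → ℝ) :
    IsProbabilityMeasure (poissonGauss σ γ x) := by
  constructor
  have h := pg_apply σ hγ0 hγ1 x Set.univ
  simp only [fun μ => @measure_univ _ _ _ (instIsProbabilityMeasureGaussianReal μ ⟨σ^2, sq_nonneg σ⟩),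
    ENNReal.toReal_one, mul_one] at h
  rw [sum_coeff γ m] at h
  have hfin : (poissonGauss σ γ x) Set.univ ≠ ⊤ := by
    rw [poissonGauss, Measure.finset_sum_apply]
    refine ENNReal.sum_ne_top.2 fun S _ => ?_
    rw [Measure.smul_apply, smul_eq_mul]
    haveI := instIsProbabilityMeasureGaussianReal (∑ i ∈ S, x i) ⟨σ^2, sq_nonneg σ⟩
    exact ENNReal.mul_ne_top ENNReal.ofReal_ne_top (measure_ne_top _ _)
  rw [← ENNReal.toReal_eq_one_iff] at *
  exact h

lemma main_case (σ : ℝ) (hσ : 0 < σ) {γ α : ℝ} (hγ0 : 0 < γ) (hγ1 : γ ≤ 1) (hα : 1 ≤ α)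
    {m : ℕ} {D D' : Fin m → ℝ}
    (hD : ∀ j, D j ∈ Set.Icc (-1:ℝ) 1) (hD' : ∀ j, D' j ∈ Set.Icc (-1:ℝ) 1)
    {i : Fin m} (hagree : ∀ j : Fin m, j ≠ i → D j = D' j) :
    hsDiv α (poissonGauss σ γ D) (poissonGauss σ γ D')
      ≤ hsDiv α (Om ⟨σ^2, sq_nonneg σ⟩ γ 1) (Om ⟨σ^2, sq_nonneg σ⟩ γ (-1)) := by
  set v : ℝ≥0 := ⟨σ^2, sq_nonneg σ⟩ with hvdef
  have hv : v ≠ 0 := by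
    intro h
    exact (pow_ne_zero 2 hσ.ne') (congrArg NNReal.toReal h)
  haveI : IsProbabilityMeasure (Om v γ 1) := Om_prob (v := v) hγ0.le hγ1
  have hm : 0 < m := i.pos
  have hH : 0 ≤ hsDiv α (Om v γ 1) (Om v γ (-1)) := hsDiv_nonneg (by linarith) _ _
  apply hsDiv_le
  intro E hE
  rw [pg_apply σ hγ0.le hγ1 D E, pg_apply σ hγ0.le hγ1 D' E,
    Finset.mul_sum, ← Finset.sum_sub_distrib]
  have huniv : (Finset.univ : Finset (Finset (Fin m)))
      = (insert i ((Finset.univ : Finset (Fin m)).erase i)).powerset := by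
    rw [Finset.insert_erase (Finset.mem_univ i), Finset.powerset_univ]
  rw [huniv, Finset.sum_powerset_insert (Finset.notMem_erase i _), ← Finset.sum_add_distrib]
  have hcard_erase : ((Finset.univ : Finset (Fin m)).erase i).card = m - 1 := by
    rw [Finset.card_erase_of_mem (Finset.mem_univ i), Finset.card_univ, Fintype.card_fin]
  have hsum_c : ∑ S ∈ ((Finset.univ : Finset (Fin m)).erase i).powerset,
      γ ^ S.card * (1-γ) ^ ((m-1) - S.card) = 1 := by
    have h := sum_pow_card γ ((Finset.univ : Finset (Fin m)).erase i)
    rw [hcard_erase] at h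
    exact h
  calc ∑ S ∈ ((Finset.univ : Finset (Fin m)).erase i).powerset,
        ((γ ^ S.card * (1-γ) ^ (m - S.card)
            * ((gaussianReal (∑ j ∈ S, D j) v) E).toReal
          - α * (γ ^ S.card * (1-γ) ^ (m - S.card)
            * ((gaussianReal (∑ j ∈ S, D' j) v) E).toReal))
        + (γ ^ (insert i S).card * (1-γ) ^ (m - (insert i S).card)
            * ((gaussianReal (∑ j ∈ insert i S, D j) v) E).toReal
          - α * (γ ^ (insert i S).card * (1-γ) ^ (m - (insert i S).card)
            * ((gaussianReal (∑ j ∈ insert i S, D' j) v) E).toReal)))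
      ≤ ∑ S ∈ ((Finset.univ : Finset (Fin m)).erase i).powerset,
          (γ ^ S.card * (1-γ) ^ ((m-1) - S.card))
            * hsDiv α (Om v γ 1) (Om v γ (-1)) := by
        refine Finset.sum_le_sum fun S hS => ?_
        have hSsub : S ⊆ (Finset.univ : Finset (Fin m)).erase i := Finset.mem_powerset.1 hS
        have hiS : i ∉ S := fun hmem => (Finset.notMem_erase i _) (hSsub hmem)
        have hScard : S.card ≤ m - 1 := hcard_erase ▸ Finset.card_le_card hSsub
        have hXX : (∑ j ∈ S, D' j) = ∑ j ∈ S, D j :=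
          Finset.sum_congr rfl fun j hj =>
            (hagree j (Finset.ne_of_mem_erase (hSsub hj))).symm
        have hYD : (∑ j ∈ insert i S, D j) = (∑ j ∈ S, D j) + D i := by
          rw [Finset.sum_insert hiS]; ring
        have hZD : (∑ j ∈ insert i S, D' j) = (∑ j ∈ S, D j) + D' i := by
          rw [Finset.sum_insert hiS, hXX]; ring
        have hA : γ ^ S.card * (1-γ) ^ (m - S.card)
            = (1-γ) * (γ ^ S.card * (1-γ) ^ ((m-1) - S.card)) := by
          have he : m - S.card = ((m-1) - S.card) + 1 := by omega
          rw [he, pow_succ]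
          ring
        have hB : γ ^ (insert i S).card * (1-γ) ^ (m - (insert i S).card)
            = γ * (γ ^ S.card * (1-γ) ^ ((m-1) - S.card)) := by
          rw [Finset.card_insert_of_notMem hiS]
          have he : m - (S.card + 1) = (m-1) - S.card := by omega
          rw [he, pow_succ]
          ring
        have hcS : 0 ≤ γ ^ S.card * (1-γ) ^ ((m-1) - S.card) :=
          mul_nonneg (pow_nonneg hγ0.le _) (pow_nonneg (by linarith) _)
        have haD : |D i| ≤ 1 := abs_le.2 ⟨(hD i).1, (hD i).2⟩
        have hbD : |D' i| ≤ 1 := abs_le.2 ⟨(hD' i).1, (hD' i).2⟩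
        have hper := perS hv hγ0 hγ1 hα (∑ j ∈ S, D j) haD hbD hE
        have hmul := mul_le_mul_of_nonneg_left hper hcS
        rw [hXX, hYD, hZD, hA, hB]
        set cS := γ ^ S.card * (1-γ) ^ ((m-1) - S.card)
        set X := ((gaussianReal (∑ j ∈ S, D j) v) E).toReal
        set Y := ((gaussianReal ((∑ j ∈ S, D j) + D i) v) E).toReal
        set Z := ((gaussianReal ((∑ j ∈ S, D j) + D' i) v) E).toReal
        calc ((1-γ) * cS * X - α * ((1-γ) * cS * X)) + (γ * cS * Y - α * (γ * cS * Z))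
            = cS * ((1-γ)*(1-α)*X + γ*Y - α*γ*Z) := by ring
          _ ≤ cS * hsDiv α (Om v γ 1) (Om v γ (-1)) := hmul
    _ = hsDiv α (Om v γ 1) (Om v γ (-1)) := by
        rw [← Finset.sum_mul, hsum_c, one_mul]

/-! ### duality and reflection -/

lemma compl_toReal (R : Measure ℝ) [IsProbabilityMeasure R] {E : Set ℝ}
    (hE : MeasurableSet E) : (R Eᶜ).toReal = 1 - (R E).toReal := by
  rw [measure_compl hE (measure_ne_top _ _), measure_univ,
    ENNReal.toReal_sub_of_le prob_le_one ENNReal.one_ne_top, ENNReal.toReal_one]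

lemma dual_le {α : ℝ} (hα : 0 < α) (P Q : Measure ℝ) [IsProbabilityMeasure P]
    [IsProbabilityMeasure Q] :
    hsDiv α P Q ≤ (1-α) + α * hsDiv α⁻¹ Q P := by
  apply hsDiv_le
  intro E hE
  have hPc := compl_toReal P hE
  have hQc := compl_toReal Q hE
  have key : (P E).toReal - α*(Q E).toReal
      = (1-α) + α*((Q Eᶜ).toReal - α⁻¹*(P Eᶜ).toReal) := by
    rw [hPc, hQc]
    field_simp
    ring
  rw [key]
  exact add_le_add_right (mul_le_mul_of_nonneg_left
    (le_hsDiv (inv_nonneg.2 hα.le) Q P hE.compl) hα.le) _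

lemma dual_ge {α : ℝ} (hα : 0 < α) (P Q : Measure ℝ) [IsProbabilityMeasure P]
    [IsProbabilityMeasure Q] :
    (1-α) + α * hsDiv α⁻¹ Q P ≤ hsDiv α P Q := by
  have h1 : ∀ F : Set ℝ, MeasurableSet F →
      (1-α) + α*((Q F).toReal - α⁻¹*(P F).toReal) ≤ hsDiv α P Q := by
    intro F hF
    have hPc := compl_toReal P hF.compl
    have hQc := compl_toReal Q hF.compl
    rw [compl_compl] at hPc hQc
    have key : (1-α) + α*((Q F).toReal - α⁻¹*(P F).toReal)
        = (P Fᶜ).toReal - α*(Q Fᶜ).toReal := by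
      rw [hPc, hQc]
      field_simp
      ring
    rw [key]
    exact le_hsDiv hα.le P Q hF.compl
  have h2 : hsDiv α⁻¹ Q P ≤ (hsDiv α P Q - (1-α))/α := by
    apply hsDiv_le
    intro F hF
    rw [le_div_iff₀ hα]
    have := h1 F hF
    linarith
  have h3 := mul_le_mul_of_nonneg_left h2 hα.le
  rw [mul_div_cancel₀ _ hα.ne'] at h3
  linarith

lemma Om_swap_le {γ β : ℝ} (hβ : 0 ≤ β) (hγ0 : 0 ≤ γ) (hγ1 : γ ≤ 1) :
    hsDiv β (Om v γ 1) (Om v γ (-1)) ≤ hsDiv β (Om v γ (-1)) (Om v γ 1) := by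
  haveI : IsProbabilityMeasure (Om v γ (-1)) := Om_prob (v := v) hγ0 hγ1
  apply hsDiv_le
  intro E hE
  have hE' : MeasurableSet ((fun x : ℝ => -x) ⁻¹' E) := hE.preimage measurable_neg
  have h1 : (Om v γ 1) E = (Om v γ (-1)) ((fun x : ℝ => -x) ⁻¹' E) := by
    rw [Om, Om, Measure.add_apply, Measure.add_apply, Measure.smul_apply, Measure.smul_apply,
      Measure.smul_apply, Measure.smul_apply]
    rw [gNeg (μ := (0:ℝ)) hE, gNeg (μ := (1:ℝ)) hE, neg_zero]
  have h2 : (Om v γ (-1)) E = (Om v γ 1) ((fun x : ℝ => -x) ⁻¹' E) := by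
    rw [Om, Om, Measure.add_apply, Measure.add_apply, Measure.smul_apply, Measure.smul_apply,
      Measure.smul_apply, Measure.smul_apply]
    rw [gNeg (μ := (0:ℝ)) hE, gNeg (μ := (-1:ℝ)) hE, neg_zero, neg_neg]
  rw [h1, h2]
  exact le_hsDiv hβ _ _ hE'

/-! ### degenerate subsampling -/

lemma pg_gamma_zero (σ : ℝ) {m : ℕ} (x : Fin m → ℝ) :
    poissonGauss σ 0 x = gaussianReal 0 ⟨σ^2, sq_nonneg σ⟩ := by
  rw [poissonGauss]
  rw [Finset.sum_eq_single (∅ : Finset (Fin m))]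
  · simp
  · intro S _ hS
    have : S.card ≠ 0 := fun h => hS (Finset.card_eq_zero.1 h)
    rw [zero_pow this]
    simp
  · intro h
    exact absurd (Finset.mem_univ _) h

/-! ### the exact computation for the witness datasets -/

lemma pg_snoc (σ : ℝ) {γ : ℝ} (hγ0 : 0 ≤ γ) (hγ1 : γ ≤ 1) (m : ℕ) (s : ℝ) :
    poissonGauss σ γ (Fin.snoc (fun _ : Fin m => (0:ℝ)) s)
      = Om ⟨σ^2, sq_nonneg σ⟩ γ s := by
  set v : ℝ≥0 := ⟨σ^2, sq_nonneg σ⟩ with hvdef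
  set x : Fin (m+1) → ℝ := Fin.snoc (fun _ : Fin m => (0:ℝ)) s with hxdef
  haveI := pg_prob σ hγ0 hγ1 x
  haveI : IsProbabilityMeasure (Om v γ s) := Om_prob hγ0 hγ1
  have hx0 : ∀ j : Fin (m+1), j ≠ Fin.last m → x j = 0 := by
    intro j hj
    obtain ⟨k, rfl⟩ := Fin.exists_castSucc_eq.2 hj
    simp [hxdef]
  have hxlast : x (Fin.last m) = s := by simp [hxdef]
  refine Measure.ext fun E hE => ?_
  rw [← ENNReal.toReal_eq_toReal_iff' (measure_ne_top _ _) (measure_ne_top _ _)]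
  rw [pg_apply σ hγ0 hγ1 x E, Om_apply hγ0 hγ1 s E]
  have hcard_erase : ((Finset.univ : Finset (Fin (m+1))).erase (Fin.last m)).card = m := by
    rw [Finset.card_erase_of_mem (Finset.mem_univ _), Finset.card_univ, Fintype.card_fin]
    omega
  have hsum_c : ∑ S ∈ ((Finset.univ : Finset (Fin (m+1))).erase (Fin.last m)).powerset,
      γ ^ S.card * (1-γ) ^ (m - S.card) = 1 := by
    have h := sum_pow_card γ ((Finset.univ : Finset (Fin (m+1))).erase (Fin.last m))
    rw [hcard_erase] at h
    exact h
  have huniv : (Finset.univ : Finset (Finset (Fin (m+1))))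
      = (insert (Fin.last m) ((Finset.univ : Finset (Fin (m+1))).erase (Fin.last m))).powerset := by
    rw [Finset.insert_erase (Finset.mem_univ _), Finset.powerset_univ]
  rw [huniv, Finset.sum_powerset_insert (Finset.notMem_erase _ _)]
  have h1 : ∑ S ∈ ((Finset.univ : Finset (Fin (m+1))).erase (Fin.last m)).powerset,
      γ ^ S.card * (1-γ) ^ (m + 1 - S.card) * ((gaussianReal (∑ j ∈ S, x j) v) E).toReal
      = (1-γ) * ((gaussianReal 0 v) E).toReal := by
    calc ∑ S ∈ ((Finset.univ : Finset (Fin (m+1))).erase (Fin.last m)).powerset,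
        γ ^ S.card * (1-γ) ^ (m + 1 - S.card) * ((gaussianReal (∑ j ∈ S, x j) v) E).toReal
        = ∑ S ∈ ((Finset.univ : Finset (Fin (m+1))).erase (Fin.last m)).powerset,
            ((1-γ) * ((gaussianReal 0 v) E).toReal) * (γ ^ S.card * (1-γ) ^ (m - S.card)) := by
          refine Finset.sum_congr rfl fun S hS => ?_
          have hSsub := Finset.mem_powerset.1 hS
          have hScard : S.card ≤ m := by
            have h' := Finset.card_le_card hSsub
            rwa [hcard_erase] at h'
          have hmean : (∑ j ∈ S, x j) = 0 :=
            Finset.sum_eq_zero fun j hj => hx0 j (Finset.ne_of_mem_erase (hSsub hj))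
          have he : m + 1 - S.card = (m - S.card) + 1 := by omega
          rw [hmean, he, pow_succ]
          ring
      _ = (1-γ) * ((gaussianReal 0 v) E).toReal := by
          rw [← Finset.mul_sum, hsum_c, mul_one]
  have h2 : ∑ S ∈ ((Finset.univ : Finset (Fin (m+1))).erase (Fin.last m)).powerset,
      γ ^ (insert (Fin.last m) S).card * (1-γ) ^ (m + 1 - (insert (Fin.last m) S).card)
        * ((gaussianReal (∑ j ∈ insert (Fin.last m) S, x j) v) E).toReal
      = γ * ((gaussianReal s v) E).toReal := by
    calc ∑ S ∈ ((Finset.univ : Finset (Fin (m+1))).erase (Fin.last m)).powerset,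
        γ ^ (insert (Fin.last m) S).card * (1-γ) ^ (m + 1 - (insert (Fin.last m) S).card)
          * ((gaussianReal (∑ j ∈ insert (Fin.last m) S, x j) v) E).toReal
        = ∑ S ∈ ((Finset.univ : Finset (Fin (m+1))).erase (Fin.last m)).powerset,
            (γ * ((gaussianReal s v) E).toReal) * (γ ^ S.card * (1-γ) ^ (m - S.card)) := by
          refine Finset.sum_congr rfl fun S hS => ?_
          have hSsub := Finset.mem_powerset.1 hS
          have hScard : S.card ≤ m := by
            have h' := Finset.card_le_card hSsub
            rwa [hcard_erase] at h'
          have hiS : Fin.last m ∉ S := fun hmem => (Finset.notMem_erase _ _) (hSsub hmem)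
          have hmean : (∑ j ∈ insert (Fin.last m) S, x j) = s := by
            rw [Finset.sum_insert hiS, hxlast,
              Finset.sum_eq_zero fun j hj => hx0 j (Finset.ne_of_mem_erase (hSsub hj))]
            ring
          rw [hmean, Finset.card_insert_of_notMem hiS]
          have he : m + 1 - (S.card + 1) = m - S.card := by omega
          rw [he, pow_succ]
          ring
      _ = γ * ((gaussianReal s v) E).toReal := by
          rw [← Finset.mul_sum, hsum_c, mul_one]
  rw [h1, h2]

end PGaux

/-- Dominating pair of datasets for the Poisson-subsampled Gaussian mechanism under the
substitution relation: for same-length datasets with entries in `[−1,1]` differing in exactly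
one entry, `H_α(Mγ(D) ‖ Mγ(D')) ≤ H_α((1−γ)N(0,σ²) + γN(1,σ²) ‖ (1−γ)N(0,σ²) + γN(−1,σ²))`
for all `α ≥ 0`, and the bound is realized by `D = (0,…,0,1)`, `D' = (0,…,0,−1)`. -/
theorem poissonGauss_dominating_pair_substitution (σ γ : ℝ) (hσ : 0 < σ)
    (hγ0 : 0 ≤ γ) (hγ1 : γ ≤ 1) :
    (∀ (m : ℕ) (D D' : Fin m → ℝ),
      (∀ j, D j ∈ Set.Icc (-1 : ℝ) 1) → (∀ j, D' j ∈ Set.Icc (-1 : ℝ) 1) →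
      (∃ i : Fin m, D i ≠ D' i ∧ ∀ j : Fin m, j ≠ i → D j = D' j) →
      ∀ α : ℝ, 0 ≤ α →
        hsDiv α (poissonGauss σ γ D) (poissonGauss σ γ D') ≤
          hsDiv α
            (ENNReal.ofReal (1 - γ) • gaussianReal 0 ⟨σ ^ 2, sq_nonneg σ⟩ +
              ENNReal.ofReal γ • gaussianReal 1 ⟨σ ^ 2, sq_nonneg σ⟩)
            (ENNReal.ofReal (1 - γ) • gaussianReal 0 ⟨σ ^ 2, sq_nonneg σ⟩ +
              ENNReal.ofReal γ • gaussianReal (-1) ⟨σ ^ 2, sq_nonneg σ⟩)) ∧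
    (∀ m : ℕ,
      poissonGauss σ γ (Fin.snoc (fun _ : Fin m => (0 : ℝ)) 1) =
        ENNReal.ofReal (1 - γ) • gaussianReal 0 ⟨σ ^ 2, sq_nonneg σ⟩ +
          ENNReal.ofReal γ • gaussianReal 1 ⟨σ ^ 2, sq_nonneg σ⟩ ∧
      poissonGauss σ γ (Fin.snoc (fun _ : Fin m => (0 : ℝ)) (-1)) =
        ENNReal.ofReal (1 - γ) • gaussianReal 0 ⟨σ ^ 2, sq_nonneg σ⟩ +
          ENNReal.ofReal γ • gaussianReal (-1) ⟨σ ^ 2, sq_nonneg σ⟩) := by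
  constructor
  · intro m D D' hD hD' hdiff α hα
    obtain ⟨i, hne, hagree⟩ := hdiff
    show hsDiv α (poissonGauss σ γ D) (poissonGauss σ γ D')
      ≤ hsDiv α (PGaux.Om ⟨σ^2, sq_nonneg σ⟩ γ 1) (PGaux.Om ⟨σ^2, sq_nonneg σ⟩ γ (-1))
    by_cases hγz : γ = 0
    · subst hγz
      have hOm : ∀ s : ℝ, PGaux.Om (⟨σ^2, sq_nonneg σ⟩ : ℝ≥0) 0 s
          = gaussianReal 0 ⟨σ^2, sq_nonneg σ⟩ := by
        intro s
        unfold PGaux.Om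
        simp
      rw [PGaux.pg_gamma_zero, PGaux.pg_gamma_zero, hOm, hOm]
    · have hγpos : 0 < γ := lt_of_le_of_ne hγ0 (Ne.symm hγz)
      haveI := PGaux.pg_prob σ hγ0 hγ1 D
      haveI := PGaux.pg_prob σ hγ0 hγ1 D'
      haveI : IsProbabilityMeasure (PGaux.Om (⟨σ^2, sq_nonneg σ⟩ : ℝ≥0) γ 1) :=
        PGaux.Om_prob hγ0 hγ1
      haveI : IsProbabilityMeasure (PGaux.Om (⟨σ^2, sq_nonneg σ⟩ : ℝ≥0) γ (-1)) :=
        PGaux.Om_prob hγ0 hγ1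
      rcases le_or_gt 1 α with h1 | h1
      · exact PGaux.main_case σ hσ hγpos hγ1 h1 hD hD' hagree
      · by_cases hα0 : α = 0
        · subst hα0
          refine le_trans (PGaux.hsDiv_le (c := 1) fun E hE => ?_) ?_
          · have h1' : ((poissonGauss σ γ D) E).toReal ≤ 1 := by
              rw [← ENNReal.toReal_one]
              exact ENNReal.toReal_mono ENNReal.one_ne_top prob_le_one
            simpa using h1'
          · have h := PGaux.le_hsDiv (le_refl (0:ℝ))
              (PGaux.Om (⟨σ^2, sq_nonneg σ⟩ : ℝ≥0) γ 1)
              (PGaux.Om (⟨σ^2, sq_nonneg σ⟩ : ℝ≥0) γ (-1)) MeasurableSet.univ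
            simpa using h
        · have hαpos : 0 < α := lt_of_le_of_ne hα (Ne.symm hα0)
          have hinv : 1 ≤ α⁻¹ := by
            have h := mul_inv_cancel₀ hα0
            nlinarith [inv_nonneg.2 hαpos.le]
          calc hsDiv α (poissonGauss σ γ D) (poissonGauss σ γ D')
              ≤ (1-α) + α * hsDiv α⁻¹ (poissonGauss σ γ D') (poissonGauss σ γ D) :=
                PGaux.dual_le hαpos _ _
            _ ≤ (1-α) + α * hsDiv α⁻¹ (PGaux.Om ⟨σ^2, sq_nonneg σ⟩ γ 1)
                  (PGaux.Om ⟨σ^2, sq_nonneg σ⟩ γ (-1)) :=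
                add_le_add_right (mul_le_mul_of_nonneg_left
                  (PGaux.main_case σ hσ hγpos hγ1 hinv hD' hD
                    (fun j hj => (hagree j hj).symm)) hαpos.le) _
            _ ≤ (1-α) + α * hsDiv α⁻¹ (PGaux.Om ⟨σ^2, sq_nonneg σ⟩ γ (-1))
                  (PGaux.Om ⟨σ^2, sq_nonneg σ⟩ γ 1) :=
                add_le_add_right (mul_le_mul_of_nonneg_left
                  (PGaux.Om_swap_le (inv_nonneg.2 hαpos.le) hγ0 hγ1) hαpos.le) _
            _ ≤ hsDiv α (PGaux.Om ⟨σ^2, sq_nonneg σ⟩ γ 1)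
                  (PGaux.Om ⟨σ^2, sq_nonneg σ⟩ γ (-1)) := PGaux.dual_ge hαpos _ _
  · intro m
    exact ⟨PGaux.pg_snoc σ hγ0 hγ1 m 1, PGaux.pg_snoc σ hγ0 hγ1 m (-1)⟩
end

section
/- Monotonicity of the hockey-stick divergence between equal-variance Gaussians in the mean shift: let σ > 0, Δ ≥ 0, and μ, μ' ∈ ℝ with |μ − μ'| ≤ Δ. Then for every α ≥ 0, H_α(N(μ,σ²) ‖ N(μ',σ²)) ≤ H_α(N(0,σ²) ‖ N(Δ,σ²)). -/
open MeasureTheory ProbabilityTheory Real Set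
open scoped ENNReal NNReal

lemma hsDiv_toReal_le_one {X : Type*} [MeasurableSpace X] (P : Measure X)
    [IsProbabilityMeasure P] (E : Set X) : (P E).toReal ≤ 1 := by
  have := prob_le_one (μ := P) (s := E)
  simpa using ENNReal.toReal_mono ENNReal.one_ne_top this

lemma term_le_hsDiv {X : Type*} [MeasurableSpace X] (α : ℝ) (hα : 0 ≤ α)
    (P Q : Measure X) [IsProbabilityMeasure P] [IsProbabilityMeasure Q]
    (E : Set X) (hE : MeasurableSet E) :
    (P E).toReal - α * (Q E).toReal ≤ hsDiv α P Q := by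
  have hbdd : BddAbove (Set.range fun E : {E : Set X // MeasurableSet E} =>
      ((P E).toReal - α * (Q E).toReal)) := by
    refine ⟨1, ?_⟩
    rintro x ⟨⟨F, hF⟩, rfl⟩
    have h1 : (P F).toReal ≤ 1 := hsDiv_toReal_le_one P F
    have h2 : 0 ≤ α * (Q F).toReal := mul_nonneg hα ENNReal.toReal_nonneg
    simp only
    linarith
  exact le_ciSup hbdd ⟨E, hE⟩

lemma gaussian_toReal (a : ℝ) {v : ℝ≥0} (hv : v ≠ 0) (s : Set ℝ) :
    (gaussianReal a v s).toReal = ∫ x in s, gaussianPDFReal a v x := by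
  rw [gaussianReal_apply_eq_integral a hv,
    ENNReal.toReal_ofReal (integral_nonneg fun x => gaussianPDFReal_nonneg a v x)]

lemma gaussian_Iic_mono {v : ℝ≥0} (t Δ θ : ℝ) (h : t ≤ Δ) :
    gaussianReal Δ v (Iic θ) ≤ gaussianReal t v (Iic θ) := by
  have hmap : (gaussianReal t v).map (· + (Δ - t)) = gaussianReal Δ v := by
    rw [gaussianReal_map_add_const]; ring_nf
  rw [← hmap, Measure.map_apply (measurable_add_const _) measurableSet_Iic]
  refine measure_mono fun x hx => ?_
  simp only [mem_preimage, mem_Iic] at hx ⊢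
  linarith

lemma gaussian_sign {v : ℝ≥0} (hv : v ≠ 0) {t α : ℝ} (ht : 0 < t) (hα : 0 < α) (x : ℝ) :
    α * gaussianPDFReal t v x ≤ gaussianPDFReal 0 v x ↔
      x ≤ (t ^ 2 - 2 * (v : ℝ) * Real.log α) / (2 * t) := by
  have hw : (0 : ℝ) < (v : ℝ) := by positivity
  have h2w : (0:ℝ) < 2 * (v:ℝ) := by positivity
  have hC : (0 : ℝ) < (√(2 * π * (v : ℝ)))⁻¹ := by
    have : (0:ℝ) < 2 * π * (v : ℝ) := by positivity
    positivity
  rw [gaussianPDFReal, gaussianPDFReal, mul_comm α, mul_assoc, mul_le_mul_iff_right₀ hC]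
  conv_lhs => rw [← Real.exp_log hα]
  rw [← Real.exp_add, Real.exp_le_exp]
  have e1 : -(x - t) ^ 2 / (2 * (v:ℝ)) + Real.log α =
      (Real.log α * (2 * (v:ℝ)) + -(x - t) ^ 2) / (2 * (v:ℝ)) := by
    field_simp; ring
  rw [e1, div_le_div_iff_of_pos_right h2w, le_div_iff₀ (by positivity : (0:ℝ) < 2 * t)]
  constructor <;> intro h <;> nlinarith

lemma gaussian_core {v : ℝ≥0} (hv : v ≠ 0) {t Δ α : ℝ} (ht : 0 ≤ t) (htΔ : t ≤ Δ)
    (hα : 0 ≤ α) (G : Set ℝ) (hG : MeasurableSet G) :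
    (gaussianReal 0 v G).toReal - α * (gaussianReal t v G).toReal ≤
      hsDiv α (gaussianReal 0 v) (gaussianReal Δ v) := by
  rcases eq_or_lt_of_le hα with hα0 | hαpos
  · refine le_trans ?_ (term_le_hsDiv α hα _ _ univ MeasurableSet.univ)
    rw [← hα0]
    simp only [zero_mul, sub_zero]
    calc (gaussianReal 0 v G).toReal ≤ 1 := hsDiv_toReal_le_one _ _
      _ = (gaussianReal 0 v univ).toReal := by simp
  rcases eq_or_lt_of_le ht with ht0 | htpos
  · rw [← ht0]
    have r1 : (gaussianReal 0 v G).toReal ≤ 1 := hsDiv_toReal_le_one _ _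
    have r0 : 0 ≤ (gaussianReal 0 v G).toReal := ENNReal.toReal_nonneg
    by_cases hα1 : α ≤ 1
    · refine le_trans ?_ (term_le_hsDiv α hα _ _ univ MeasurableSet.univ)
      simp only [measure_univ, ENNReal.toReal_one, mul_one]
      nlinarith
    · refine le_trans ?_ (term_le_hsDiv α hα _ _ ∅ MeasurableSet.empty)
      push_neg at hα1
      simp only [measure_empty, ENNReal.toReal_zero, mul_zero, sub_zero]
      nlinarith
  · set θ := (t ^ 2 - 2 * (v : ℝ) * Real.log α) / (2 * t) with hθ
    refine le_trans ?_ (term_le_hsDiv α hα _ _ (Iic θ) measurableSet_Iic)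
    have step2 : α * (gaussianReal Δ v (Iic θ)).toReal ≤
        α * (gaussianReal t v (Iic θ)).toReal :=
      mul_le_mul_of_nonneg_left
        (ENNReal.toReal_mono (measure_ne_top _ _) (gaussian_Iic_mono t Δ θ htΔ)) hα
    have step1 : (gaussianReal 0 v G).toReal - α * (gaussianReal t v G).toReal ≤
        (gaussianReal 0 v (Iic θ)).toReal - α * (gaussianReal t v (Iic θ)).toReal := by
      rw [gaussian_toReal 0 hv, gaussian_toReal t hv, gaussian_toReal 0 hv,
        gaussian_toReal t hv]
      set f : ℝ → ℝ := fun x => gaussianPDFReal 0 v x - α * gaussianPDFReal t v x with hf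
      have hint0 := integrable_gaussianPDFReal 0 v
      have hintt := (integrable_gaussianPDFReal t v).const_mul α
      have hfi : Integrable f := hint0.sub hintt
      have hrw : ∀ s : Set ℝ, (∫ x in s, gaussianPDFReal 0 v x) -
          α * ∫ x in s, gaussianPDFReal t v x = ∫ x in s, f x := by
        intro s
        rw [integral_sub hint0.restrict hintt.restrict, integral_const_mul]
      rw [hrw G, hrw (Iic θ)]
      have hpos : ∀ x ∈ Iic θ, 0 ≤ f x := fun x hx =>
        sub_nonneg.mpr ((gaussian_sign hv htpos hαpos x).mpr hx)
      have hneg : ∀ x ∈ G \ Iic θ, f x ≤ 0 := fun x hx =>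
        sub_nonpos.mpr (le_of_not_ge fun hc => hx.2 ((gaussian_sign hv htpos hαpos x).mp hc))
      calc ∫ x in G, f x
          = (∫ x in G ∩ Iic θ, f x) + ∫ x in G \ Iic θ, f x :=
            (integral_inter_add_diff measurableSet_Iic hfi.integrableOn).symm
        _ ≤ ∫ x in G ∩ Iic θ, f x := by
            linarith [setIntegral_nonpos (μ := volume) (hG.diff measurableSet_Iic) hneg]
        _ ≤ ∫ x in Iic θ, f x :=
            setIntegral_mono_set hfi.integrableOn
              ((ae_restrict_iff' measurableSet_Iic).mpr (ae_of_all _ hpos))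
              (HasSubset.Subset.eventuallyLE inter_subset_right)
    linarith

/-- Monotonicity of the hockey-stick divergence between equal-variance Gaussians in the
mean shift: if `|μ − μ'| ≤ Δ` then for every `α ≥ 0`,
`H_α(N(μ,σ²) ‖ N(μ',σ²)) ≤ H_α(N(0,σ²) ‖ N(Δ,σ²))`. -/
theorem hsDiv_gaussian_mono_mean_shift (σ Δ μ μ' : ℝ) (hσ : 0 < σ) (hΔ : 0 ≤ Δ)
    (hμ : |μ - μ'| ≤ Δ) (α : ℝ) (hα : 0 ≤ α) :
    hsDiv α (gaussianReal μ ⟨σ ^ 2, sq_nonneg σ⟩) (gaussianReal μ' ⟨σ ^ 2, sq_nonneg σ⟩) ≤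
      hsDiv α (gaussianReal 0 ⟨σ ^ 2, sq_nonneg σ⟩) (gaussianReal Δ ⟨σ ^ 2, sq_nonneg σ⟩) := by
  set v : ℝ≥0 := ⟨σ ^ 2, sq_nonneg σ⟩ with hvdef
  have hv : v ≠ 0 := by
    intro h
    apply (pow_pos hσ 2).ne'
    have := congrArg NNReal.toReal h
    exact this
  haveI : Nonempty {E : Set ℝ // MeasurableSet E} := ⟨⟨∅, MeasurableSet.empty⟩⟩
  apply ciSup_le
  rintro ⟨E, hE⟩
  simp only
  have hmap0 : gaussianReal μ v = (gaussianReal 0 v).map (· + μ) := by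
    rw [gaussianReal_map_add_const, zero_add]
  have hmap' : gaussianReal μ' v = (gaussianReal (μ' - μ) v).map (· + μ) := by
    rw [gaussianReal_map_add_const, sub_add_cancel]
  have hFm : MeasurableSet ((· + μ) ⁻¹' E) := hE.preimage (measurable_add_const μ)
  rw [hmap0, hmap', Measure.map_apply (measurable_add_const μ) hE,
    Measure.map_apply (measurable_add_const μ) hE]
  set δ := μ' - μ with hδdef
  have hδ : |δ| ≤ Δ := by rw [hδdef, abs_sub_comm]; exact hμ
  rcases le_total 0 δ with hδ0 | hδ0
  · exact gaussian_core hv hδ0 (le_trans (le_abs_self δ) hδ) hα _ hFm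
  · have hneg : ∀ m : ℝ, gaussianReal m v = (gaussianReal (-m) v).map (fun x => (-1 : ℝ) * x) := by
      intro m
      rw [gaussianReal_map_const_mul]
      have h1 : (⟨(-1 : ℝ) ^ 2, sq_nonneg _⟩ : ℝ≥0) = 1 := by
        ext; norm_num
      congr 1
      · ring
      · ext; simp
    have hmeas : Measurable (fun x : ℝ => (-1 : ℝ) * x) := measurable_const_mul _
    have e0 : (gaussianReal 0 v) ((· + μ) ⁻¹' E) =
        (gaussianReal 0 v) ((fun x => (-1 : ℝ) * x) ⁻¹' ((· + μ) ⁻¹' E)) := by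
      nth_rewrite 1 [hneg 0]
      rw [Measure.map_apply hmeas hFm, neg_zero]
    have eδ : (gaussianReal δ v) ((· + μ) ⁻¹' E) =
        (gaussianReal (-δ) v) ((fun x => (-1 : ℝ) * x) ⁻¹' ((· + μ) ⁻¹' E)) := by
      rw [hneg δ, Measure.map_apply hmeas hFm]
    rw [e0, eδ]
    refine gaussian_core hv (neg_nonneg.mpr hδ0) ?_ hα _ (hFm.preimage hmeas)
    calc -δ = |δ| := (abs_of_nonpos hδ0).symm
      _ ≤ Δ := hδ
end

section
/- Privacy-loss-distribution representation of the hockey-stick divergence: let P and Q be mutually absolutely continuous probability measures on a measurable space, and let L be the law of the random variable Y := ln(dP/dQ)(X) for X ∼ P, where dP/dQ is the Radon–Nikodym derivative. Then for every ε ∈ ℝ, H_{e^ε}(P ‖ Q) = E_{Y ∼ L}[max(0, 1 − e^{ε − Y})]. -/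
open MeasureTheory ProbabilityTheory
open scoped ENNReal NNReal

/-- Privacy-loss-distribution representation of the hockey-stick divergence: for mutually
absolutely continuous probability measures `P ≪ Q ≪ P`, letting `L` be the law of
`Y = ln(dP/dQ)(X)` for `X ∼ P` (the privacy loss distribution), we have for every `ε ∈ ℝ`
that `H_{e^ε}(P ‖ Q) = E_{Y ∼ L}[max(0, 1 − e^{ε − Y})]`. -/
theorem hsDiv_eq_expectation_pld {X : Type*} [MeasurableSpace X]
    (P Q : Measure X) [IsProbabilityMeasure P] [IsProbabilityMeasure Q]
    (hPQ : P ≪ Q) (hQP : Q ≪ P) (ε : ℝ) :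
    hsDiv (Real.exp ε) P Q =
      ∫ y, max 0 (1 - Real.exp (ε - y))
        ∂(P.map fun x => Real.log ((P.rnDeriv Q x).toReal)) := by
  set α := Real.exp ε with hα
  have hαpos : 0 < α := Real.exp_pos ε
  set g : X → ℝ := fun x => (P.rnDeriv Q x).toReal with hg
  have hgmeas : Measurable g := (Measure.measurable_rnDeriv P Q).ennreal_toReal
  have hgnn : ∀ x, 0 ≤ g x := fun x => ENNReal.toReal_nonneg
  set E : Set X := {x | α < g x} with hE
  have hEmeas : MeasurableSet E := measurableSet_lt measurable_const hgmeas
  have hgint : Integrable g Q := Measure.integrable_toReal_rnDeriv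
  have hint : Integrable (fun x => g x - α) Q := hgint.sub (integrable_const α)
  have hmaxint : Integrable (fun x => max 0 (g x - α)) Q := by
    have := hint.pos_part
    simpa [max_comm] using this
  have hmaxnn : ∀ x, 0 ≤ max 0 (g x - α) := fun x => le_max_left _ _
  set c : ℝ := ∫ x, max 0 (g x - α) ∂Q with hc
  have hF : ∀ A : Set X, MeasurableSet A →
      (P A).toReal - α * (Q A).toReal = ∫ x in A, (g x - α) ∂Q := by
    intro A hA
    rw [integral_sub hgint.integrableOn (integrable_const α).integrableOn,
      Measure.setIntegral_toReal_rnDeriv hPQ A, setIntegral_const]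
    simp [smul_eq_mul, mul_comm]
    rfl
  have hle : ∀ A : Set X, MeasurableSet A →
      (P A).toReal - α * (Q A).toReal ≤ c := by
    intro A hA
    rw [hF A hA]
    calc ∫ x in A, (g x - α) ∂Q ≤ ∫ x in A, max 0 (g x - α) ∂Q := by
          refine setIntegral_mono_on hint.integrableOn hmaxint.integrableOn hA ?_
          intro x _; exact le_max_right _ _
      _ ≤ c := setIntegral_le_integral hmaxint (Filter.Eventually.of_forall hmaxnn)
  have hEeq : (P E).toReal - α * (Q E).toReal = c := by
    rw [hF E hEmeas, hc, ← integral_indicator hEmeas]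
    refine integral_congr_ae (Filter.Eventually.of_forall fun x => ?_)
    by_cases h : x ∈ E
    · have hx : α < g x := h
      rw [Set.indicator_of_mem h]
      exact (max_eq_right (sub_nonneg.mpr hx.le)).symm
    · have hx : g x ≤ α := not_lt.mp h
      rw [Set.indicator_of_notMem h]
      exact (max_eq_left (sub_nonpos.mpr hx)).symm
  have hLHS : hsDiv α P Q = c := by
    unfold hsDiv
    apply le_antisymm
    · exact ciSup_le fun A => hle A A.2
    · have hb : BddAbove (Set.range fun A : {E : Set X // MeasurableSet E} =>
          ((P A).toReal - α * (Q A).toReal)) := by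
        refine ⟨c, ?_⟩
        rintro y ⟨A, rfl⟩
        exact hle A A.2
      have := le_ciSup hb (⟨E, hEmeas⟩ : {E : Set X // MeasurableSet E})
      rw [hEeq] at this
      exact this
  have hY : Measurable fun x => Real.log (g x) := Real.measurable_log.comp hgmeas
  have hfmeas : Measurable fun y : ℝ => max 0 (1 - Real.exp (ε - y)) :=
    measurable_const.max
      (measurable_const.sub (Real.measurable_exp.comp (measurable_const.sub measurable_id)))
  have hRHS : (∫ y, max 0 (1 - Real.exp (ε - y)) ∂(P.map fun x => Real.log (g x))) = c := by
    rw [integral_map hY.aemeasurable hfmeas.aestronglyMeasurable]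
    have hpos : ∀ᵐ x ∂P, 0 < g x := by
      have h1 : ∀ᵐ x ∂P, 0 < P.rnDeriv Q x := Measure.rnDeriv_pos hPQ
      have h2 : ∀ᵐ x ∂P, P.rnDeriv Q x < ∞ := hPQ.ae_le (Measure.rnDeriv_lt_top P Q)
      filter_upwards [h1, h2] with x hx1 hx2
      exact ENNReal.toReal_pos hx1.ne' hx2.ne
    have step1 : (∫ x, max 0 (1 - Real.exp (ε - Real.log (g x))) ∂P)
        = ∫ x, max 0 (1 - α / g x) ∂P := by
      refine integral_congr_ae ?_
      filter_upwards [hpos] with x hx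
      rw [Real.exp_sub, Real.exp_log hx, hα]
    have step2 : (∫ x, max 0 (1 - α / g x) ∂P)
        = ∫ x, g x • max 0 (1 - α / g x) ∂Q :=
      (integral_rnDeriv_smul (f := fun x => max 0 (1 - α / g x)) hPQ).symm
    have step3 : (∫ x, g x • max 0 (1 - α / g x) ∂Q) = c := by
      rw [hc]
      refine integral_congr_ae (Filter.Eventually.of_forall fun x => ?_)
      show g x • max 0 (1 - α / g x) = max 0 (g x - α)
      rcases eq_or_lt_of_le (hgnn x) with h0 | h0
    -- g x = 0
      · rw [← h0, zero_smul]
        exact (max_eq_left (by linarith : (0:ℝ) - α ≤ 0)).symm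
      · by_cases hgα : g x ≤ α
        · have h1 : 1 - α / g x ≤ 0 := by
            rw [sub_nonpos]
            exact (one_le_div h0).mpr hgα
          rw [max_eq_left h1, smul_zero, max_eq_left (sub_nonpos.mpr hgα)]
        · push_neg at hgα
          have h1 : 0 ≤ 1 - α / g x := by
            rw [sub_nonneg]
            exact le_of_lt ((div_lt_one h0).mpr hgα)
          rw [max_eq_right h1, max_eq_right (sub_nonneg.mpr hgα.le), smul_eq_mul]
          field_simp
    rw [step1, step2, step3]
  rw [hLHS, hRHS]
end
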